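/- Let x_0, …, x_m (m ≥ 1) be distinct points of the weighted Hamming cube H_W. Then the family (x_0,…,x_m) is affinely independent in ℝⁿ if and only if there exists p > 1 such that the metric space {x_0,…,x_m} is of p-negative type. -/

import Mathlib

open Finset Nat

variable {N : ℕ}

open scoped MatrixOrder Matrix.Norms.L2Operator in
/-- Gram decomposition of a PSD kernel. -/
lemma gram_of_psd (K : Fin N → Fin N → ℝ) (hsym : ∀ i j, K i j = K j i)
    (h : ∀ η : Fin N → ℝ, 0 ≤ ∑ i, ∑ j, η i * η j * K i j) :
    ∃ B : Fin N → Fin N → ℝ, ∀ i j, K i j = ∑ r, B r i * B r j := by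
  have hpsd : Matrix.PosSemidef (Matrix.of K) := by
    refine Matrix.posSemidef_iff_dotProduct_mulVec.mpr ⟨?_, ?_⟩
    · ext i j
      simp [Matrix.conjTranspose, hsym i j]
    · intro x
      have := h x
      simp only [dotProduct, Matrix.mulVec, star, Matrix.of_apply]
      refine this.trans_eq ?_
      simp only [id, Finset.mul_sum]
      apply Finset.sum_congr rfl
      intro i _
      apply Finset.sum_congr rfl
      intro j _
      ring
  obtain ⟨B, hB⟩ : ∃ B : Matrix (Fin N) (Fin N) ℝ, Matrix.of K = Matrix.conjTranspose B * B :=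
    CStarAlgebra.nonneg_iff_eq_star_mul_self.mp hpsd.nonneg
  refine ⟨fun r i => B r i, fun i j => ?_⟩
  have := congrArg (fun M => M i j) hB
  simp only [Matrix.mul_apply, Matrix.conjTranspose_apply, Matrix.of_apply] at this
  simpa using this

/-- Schur product: Gram kernel times PSD kernel is PSD. -/
lemma schur_gram (K L : Fin N → Fin N → ℝ)
    (hK : ∃ B : Fin N → Fin N → ℝ, ∀ i j, K i j = ∑ r, B r i * B r j)
    (hL : ∀ η : Fin N → ℝ, 0 ≤ ∑ i, ∑ j, η i * η j * L i j)
    (η : Fin N → ℝ) : 0 ≤ ∑ i, ∑ j, η i * η j * (K i j * L i j) := by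
  obtain ⟨B, hB⟩ := hK
  have hterm : ∀ i j : Fin N, η i * η j * (K i j * L i j)
      = ∑ r, (η i * B r i) * (η j * B r j) * L i j := by
    intro i j
    simp only [hB, Finset.sum_mul, Finset.mul_sum]
    exact Finset.sum_congr rfl fun r _ => by ring
  have key : ∑ i, ∑ j, η i * η j * (K i j * L i j)
      = ∑ r, ∑ i, ∑ j, (η i * B r i) * (η j * B r j) * L i j := by
    calc ∑ i, ∑ j, η i * η j * (K i j * L i j)
        = ∑ i, ∑ j, ∑ r, (η i * B r i) * (η j * B r j) * L i j :=
          Finset.sum_congr rfl fun i _ => Finset.sum_congr rfl fun j _ => hterm i j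
      _ = ∑ i, ∑ r, ∑ j, (η i * B r i) * (η j * B r j) * L i j :=
          Finset.sum_congr rfl fun i _ => Finset.sum_comm
      _ = ∑ r, ∑ i, ∑ j, (η i * B r i) * (η j * B r j) * L i j := Finset.sum_comm
  rw [key]
  exact Finset.sum_nonneg fun r _ => hL fun i => η i * B r i

lemma psd_pow (K : Fin N → Fin N → ℝ) (hsym : ∀ i j, K i j = K j i)
    (h : ∀ η : Fin N → ℝ, 0 ≤ ∑ i, ∑ j, η i * η j * K i j) (ℓ : ℕ)
    (η : Fin N → ℝ) : 0 ≤ ∑ i, ∑ j, η i * η j * K i j ^ ℓ := by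
  induction ℓ generalizing η with
  | zero =>
      simp only [pow_zero, mul_one]
      have : ∑ i, ∑ j, η i * η j = (∑ i, η i) * (∑ j, η j) := by
        rw [Finset.sum_mul_sum]
      rw [this, ← sq]
      positivity
  | succ ℓ ih =>
      have : ∀ i j, K i j ^ (ℓ + 1) = K i j * K i j ^ ℓ := fun i j => by ring
      simp only [this]
      exact schur_gram K (fun i j => K i j ^ ℓ) (gram_of_psd K hsym h) ih η

lemma psd_exp (K : Fin N → Fin N → ℝ) (hsym : ∀ i j, K i j = K j i)
    (h : ∀ η : Fin N → ℝ, 0 ≤ ∑ i, ∑ j, η i * η j * K i j)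
    (η : Fin N → ℝ) : 0 ≤ ∑ i, ∑ j, η i * η j * Real.exp (K i j) := by
  have hexp : ∀ z : ℝ, Real.exp z = ∑' n : ℕ, z ^ n / (n ! : ℝ) := by
    intro z
    rw [Real.exp_eq_exp_ℝ, NormedSpace.exp_eq_tsum_div]
  have hsummable : ∀ (c : ℝ) (z : ℝ), Summable (fun n : ℕ => c * (z ^ n / (n ! : ℝ))) := by
    intro c z
    exact (Real.summable_pow_div_factorial z).mul_left c
  calc (0:ℝ) ≤ ∑' n : ℕ, ∑ i, ∑ j, η i * η j * (K i j ^ n / (n ! : ℝ)) := by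
        apply tsum_nonneg
        intro n
        have : ∑ i, ∑ j, η i * η j * (K i j ^ n / (n ! : ℝ))
            = (∑ i, ∑ j, η i * η j * K i j ^ n) / (n ! : ℝ) := by
          rw [Finset.sum_div]
          apply Finset.sum_congr rfl; intro i _
          rw [Finset.sum_div]
          apply Finset.sum_congr rfl; intro j _
          ring
        rw [this]
        exact div_nonneg (psd_pow K hsym h n η) (by positivity)
    _ = ∑ i, ∑ j, η i * η j * Real.exp (K i j) := by
        rw [Summable.tsum_finsetSum (fun i _ => ?_)]
        · apply Finset.sum_congr rfl; intro i _
          rw [Summable.tsum_finsetSum (fun j _ => hsummable _ _)]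
          apply Finset.sum_congr rfl; intro j _
          rw [hexp (K i j), ← tsum_mul_left]
        · exact summable_sum (fun j _ => hsummable _ _)

/-- Schoenberg: a kernel of negative type has positive semidefinite exponential. -/
lemma schoenberg_psd [NeZero N] (d : Fin N → Fin N → ℝ)
    (hsym : ∀ i j, d i j = d j i) (hdiag : ∀ i, d i i = 0)
    (hneg : ∀ ξ : Fin N → ℝ, ∑ i, ξ i = 0 → ∑ i, ∑ j, d i j * ξ i * ξ j ≤ 0)
    {t : ℝ} (ht : 0 ≤ t) (ζ : Fin N → ℝ) :
    0 ≤ ∑ i, ∑ j, ζ i * ζ j * Real.exp (-(t * d i j)) := by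
  classical
  set i0 : Fin N := ⟨0, Nat.pos_of_ne_zero (NeZero.ne N)⟩ with hi0
  set K : Fin N → Fin N → ℝ := fun i j => t * (d i i0 + d j i0 - d i j) with hK
  have hKsym : ∀ i j, K i j = K j i := by
    intro i j; simp only [hK]; rw [hsym i j]; ring
  have hKpsd : ∀ η : Fin N → ℝ, 0 ≤ ∑ i, ∑ j, η i * η j * K i j := by
    intro η
    set s : ℝ := ∑ i, η i with hs
    set A : ℝ := ∑ i, d i i0 * η i with hA
    set ξ : Fin N → ℝ := fun i => η i - (if i = i0 then s else 0) with hξ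
    have hξsum : ∑ i, ξ i = 0 := by
      simp only [hξ, Finset.sum_sub_distrib, Finset.sum_ite_eq' Finset.univ i0,
        Finset.mem_univ, if_true, ← hs, sub_self]
    have hQ : ∑ i, ∑ j, d i j * ξ i * ξ j
        = ∑ i, ∑ j, d i j * η i * η j - 2 * s * A := by
      have inner : ∀ i, ∑ j, d i j * ξ i * ξ j
          = ((∑ j, d i j * η i * η j) - d i i0 * η i * s)
            - (if i = i0 then s * ∑ j, d i j * η j else 0)
            + (if i = i0 then s * s * d i i0 else 0) := by
        intro i
        have h1 : ∀ j, d i j * ξ i * ξ j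
            = (d i j * η i * η j - (if j = i0 then d i j * η i * s else 0))
              - (if i = i0 then s * (d i j * η j) else 0)
              + (if i = i0 ∧ j = i0 then s * s * d i j else 0) := by
          intro j; simp only [hξ]
          by_cases hi : i = i0 <;> by_cases hj : j = i0 <;> simp [hi, hj] <;> ring
        simp only [h1, Finset.sum_add_distrib, Finset.sum_sub_distrib]
        congr 1
        · congr 1
          · congr 1
            rw [Finset.sum_ite_eq' Finset.univ i0]
            simp
          · by_cases hi : i = i0 <;> simp [hi, Finset.mul_sum]
        · by_cases hi : i = i0 <;>
            simp [hi, Finset.sum_ite_eq' Finset.univ i0]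
      rw [Finset.sum_congr rfl fun i _ => inner i]
      rw [Finset.sum_add_distrib, Finset.sum_sub_distrib, Finset.sum_sub_distrib]
      rw [Finset.sum_ite_eq' Finset.univ i0, Finset.sum_ite_eq' Finset.univ i0]
      have e1 : ∑ i, d i i0 * η i * s = A * s := by rw [hA, Finset.sum_mul]
      have e2 : ∑ j, d i0 j * η j = A := by
        rw [hA]; exact Finset.sum_congr rfl fun j _ => by rw [hsym i0 j]
      simp only [Finset.mem_univ, if_true, e1, e2, hdiag i0]
      ring
    have hKval : ∑ i, ∑ j, η i * η j * K i j
        = t * (2 * s * A - ∑ i, ∑ j, d i j * η i * η j) := by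
      have inner : ∀ i, ∑ j, η i * η j * K i j
          = t * (η i * d i i0 * s + η i * A - ∑ j, d i j * η i * η j) := by
        intro i
        have h1 : ∀ j, η i * η j * K i j
            = t * ((η i * d i i0) * η j + η i * (d j i0 * η j) - d i j * η i * η j) := by
          intro j; simp only [hK]; ring
        rw [Finset.sum_congr rfl fun j _ => h1 j, ← Finset.mul_sum]
        congr 1
        rw [Finset.sum_sub_distrib, Finset.sum_add_distrib, ← Finset.mul_sum, ← Finset.mul_sum]
      rw [Finset.sum_congr rfl fun i _ => inner i, ← Finset.mul_sum]
      congr 1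
      rw [Finset.sum_sub_distrib, Finset.sum_add_distrib]
      have e1 : ∑ i, η i * d i i0 * s = A * s := by
        rw [hA, Finset.sum_mul]
        exact Finset.sum_congr rfl fun i _ => by ring
      have e2 : ∑ i, η i * A = s * A := by rw [← Finset.sum_mul]
      rw [e1, e2]
      ring
    rw [hKval]
    have := hneg ξ hξsum
    rw [hQ] at this
    nlinarith [this, ht]
  have hXexp : ∀ i j, Real.exp (-(t * d i j))
      = Real.exp (-(t * d i i0)) * Real.exp (-(t * d j i0)) * Real.exp (K i j) := by
    intro i j
    rw [← Real.exp_add, ← Real.exp_add]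
    congr 1
    simp only [hK]; ring
  have key : ∑ i, ∑ j, ζ i * ζ j * Real.exp (-(t * d i j))
      = ∑ i, ∑ j, (fun i => ζ i * Real.exp (-(t * d i i0))) i
          * (fun i => ζ i * Real.exp (-(t * d i i0))) j * Real.exp (K i j) := by
    apply Finset.sum_congr rfl; intro i _
    apply Finset.sum_congr rfl; intro j _
    rw [hXexp i j]; ring
  rw [key]
  exact psd_exp K hKsym hKpsd _

/-- Per-coordinate identity on the weighted cube. -/
lemma cube_coord_id (ξ a : Fin N → ℝ) (w : ℝ) (hw : 0 < w)
    (ha : ∀ i, a i = 0 ∨ a i = w) (hξ : ∑ i, ξ i = 0) :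
    ∑ i, ∑ j, |a i - a j| * ξ i * ξ j = -(2 / w * (∑ i, ξ i * a i) ^ 2) := by
  have habs : ∀ i j, |a i - a j| = a i + a j - 2 / w * (a i * a j) := by
    intro i j
    rcases ha i with h | h <;> rcases ha j with h' | h' <;> rw [h, h']
    · simp
    · rw [zero_sub, abs_neg, abs_of_pos hw]; field_simp; ring
    · rw [sub_zero, abs_of_pos hw]; field_simp; ring
    · rw [sub_self, abs_zero]; field_simp; ring
  set T : ℝ := ∑ i, ξ i * a i with hT
  have inner : ∀ i, ∑ j, |a i - a j| * ξ i * ξ j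
      = a i * ξ i * (∑ j, ξ j) + ξ i * T - 2 / w * (ξ i * a i) * T := by
    intro i
    have h1 : ∀ j, |a i - a j| * ξ i * ξ j
        = a i * ξ i * ξ j + ξ i * (ξ j * a j) - 2 / w * (ξ i * a i) * (ξ j * a j) := by
      intro j; rw [habs i j]; ring
    rw [Finset.sum_congr rfl fun j _ => h1 j, Finset.sum_sub_distrib,
      Finset.sum_add_distrib, ← Finset.mul_sum, ← Finset.mul_sum, ← Finset.mul_sum, ← hT]
  rw [Finset.sum_congr rfl fun i _ => inner i, Finset.sum_sub_distrib,
    Finset.sum_add_distrib, hξ]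
  simp only [mul_zero, Finset.sum_const_zero, zero_add]
  rw [← Finset.sum_mul, ← Finset.sum_mul]
  have e1 : ∑ i, 2 / w * (ξ i * a i) = 2 / w * T := by rw [hT, Finset.mul_sum]
  rw [hξ, e1]
  ring

/-- The ℓ¹ quadratic form identity on the weighted cube. -/
lemma cube_Q1 {n : ℕ} (w : Fin n → ℝ) (hw : ∀ k, 0 < w k)
    (x : Fin N → Fin n → ℝ) (hxH : ∀ i k, x i k = 0 ∨ x i k = w k)
    (ξ : Fin N → ℝ) (hξ : ∑ i, ξ i = 0) :
    ∑ i, ∑ j, (∑ k, |x i k - x j k|) * ξ i * ξ j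
      = -∑ k, 2 / w k * (∑ i, ξ i * x i k) ^ 2 := by
  have h1 : ∀ i j : Fin N, (∑ k, |x i k - x j k|) * ξ i * ξ j
      = ∑ k, |x i k - x j k| * ξ i * ξ j := by
    intro i j
    rw [Finset.sum_mul, Finset.sum_mul]
  calc ∑ i, ∑ j, (∑ k, |x i k - x j k|) * ξ i * ξ j
      = ∑ i, ∑ j, ∑ k, |x i k - x j k| * ξ i * ξ j :=
        Finset.sum_congr rfl fun i _ => Finset.sum_congr rfl fun j _ => h1 i j
    _ = ∑ i, ∑ k, ∑ j, |x i k - x j k| * ξ i * ξ j :=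
        Finset.sum_congr rfl fun i _ => Finset.sum_comm
    _ = ∑ k, ∑ i, ∑ j, |x i k - x j k| * ξ i * ξ j := Finset.sum_comm
    _ = ∑ k, -(2 / w k * (∑ i, ξ i * x i k) ^ 2) :=
        Finset.sum_congr rfl fun k _ =>
          cube_coord_id ξ (fun i => x i k) (w k) (hw k) (fun i => hxH i k) hξ
    _ = -∑ k, 2 / w k * (∑ i, ξ i * x i k) ^ 2 := by rw [Finset.sum_neg_distrib]

open MeasureTheory in
lemma exp_one_sub_nonneg {y : ℝ} (hy : 0 ≤ y) :
    0 ≤ 1 - Real.exp (-y) ∧ 1 - Real.exp (-y) ≤ y := by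
  constructor
  · have := Real.exp_le_one_iff.mpr (neg_nonpos.mpr hy)
    linarith
  · have := Real.add_one_le_exp (-y)
    nlinarith [Real.exp_pos (-y)]

open MeasureTheory Set in
lemma integrableOn_aux {α : ℝ} (hα0 : 0 < α) (hα1 : α < 1) {c : ℝ} (hc : 0 ≤ c) :
    IntegrableOn (fun t => (1 - Real.exp (-(t * c))) * t ^ (-1 - α)) (Ioi (0:ℝ)) := by
  have hmeas : ∀ s : Set ℝ, MeasurableSet s → s ⊆ Ioi 0 →
      AEStronglyMeasurable (fun t => (1 - Real.exp (-(t * c))) * t ^ (-1 - α))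
        (volume.restrict s) := by
    intro s hms hsub
    apply ContinuousOn.aestronglyMeasurable ?_ hms
    apply ContinuousOn.mul
    · fun_prop
    · intro t ht
      exact (Real.continuousAt_rpow_const t _ (Or.inl (ne_of_gt (hsub ht)))).continuousWithinAt
  have key : IntegrableOn (fun t => (1 - Real.exp (-(t * c))) * t ^ (-1 - α)) (Ioc (0:ℝ) 1)
      ∧ IntegrableOn (fun t => (1 - Real.exp (-(t * c))) * t ^ (-1 - α)) (Ioi (1:ℝ)) := by
    constructor
    · have hg : IntegrableOn (fun t : ℝ => c * t ^ (-α)) (Ioc (0:ℝ) 1) := by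
        refine Integrable.const_mul ?_ c
        exact ((intervalIntegrable_iff_integrableOn_Ioc_of_le zero_le_one).mp
          (intervalIntegral.intervalIntegrable_rpow' (by linarith)))
      refine hg.mono' (hmeas _ measurableSet_Ioc Ioc_subset_Ioi_self) ?_
      filter_upwards [ae_restrict_mem measurableSet_Ioc] with t ht
      have ht0 : 0 < t := ht.1
      have hb := exp_one_sub_nonneg (y := t * c) (by positivity)
      rw [Real.norm_eq_abs, abs_of_nonneg (mul_nonneg hb.1 (Real.rpow_nonneg ht0.le _))]
      calc (1 - Real.exp (-(t * c))) * t ^ (-1 - α)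
          ≤ (t * c) * t ^ (-1 - α) := by
            apply mul_le_mul_of_nonneg_right hb.2 (Real.rpow_nonneg ht0.le _)
        _ = c * (t * t ^ (-1 - α)) := by ring
        _ = c * t ^ (-α) := by
            have e := (Real.rpow_add ht0 1 (-1 - α)).symm
            rw [Real.rpow_one] at e
            rw [e, show (1:ℝ) + (-1 - α) = -α by ring]
    · have hg : IntegrableOn (fun t : ℝ => t ^ (-1 - α)) (Ioi (1:ℝ)) :=
        integrableOn_Ioi_rpow_of_lt (by linarith) zero_lt_one
      refine hg.mono' (hmeas _ measurableSet_Ioi (Ioi_subset_Ioi zero_le_one)) ?_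
      filter_upwards [ae_restrict_mem measurableSet_Ioi] with t ht
      have ht0 : (0:ℝ) < t := lt_trans zero_lt_one ht
      have hb := exp_one_sub_nonneg (y := t * c) (by positivity)
      rw [Real.norm_eq_abs, abs_of_nonneg (mul_nonneg hb.1 (Real.rpow_nonneg ht0.le _))]
      have h1 : 1 - Real.exp (-(t * c)) ≤ 1 := by
        have := Real.exp_pos (-(t * c)); linarith
      nlinarith [Real.rpow_nonneg ht0.le (-1 - α), h1, hb.1]
  have := key.1.union key.2
  rwa [Ioc_union_Ioi_eq_Ioi zero_le_one] at this

open MeasureTheory Set in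
lemma integral_scaling {α : ℝ} (hα0 : 0 < α) (hα1 : α < 1) {c : ℝ} (hc : 0 < c) :
    ∫ t in Ioi (0:ℝ), (1 - Real.exp (-(t * c))) * t ^ (-1 - α)
      = c ^ α * ∫ t in Ioi (0:ℝ), (1 - Real.exp (-t)) * t ^ (-1 - α) := by
  set g : ℝ → ℝ := fun s => (1 - Real.exp (-s)) * s ^ (-1 - α) with hg
  have step1 : ∫ t in Ioi (0:ℝ), (1 - Real.exp (-(t * c))) * t ^ (-1 - α)
      = ∫ t in Ioi (0:ℝ), c ^ (1 + α) * g (c * t) := by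
    apply setIntegral_congr_fun measurableSet_Ioi
    intro t ht
    have ht0 : (0:ℝ) < t := ht
    simp only [hg]
    rw [Real.mul_rpow hc.le ht0.le]
    have e : c ^ (1 + α) * c ^ (-1 - α) = 1 := by
      rw [← Real.rpow_add hc, show (1 + α) + (-1 - α) = 0 by ring, Real.rpow_zero]
    calc (1 - Real.exp (-(t * c))) * t ^ (-1 - α)
        = (c ^ (1 + α) * c ^ (-1 - α)) * ((1 - Real.exp (-(t * c))) * t ^ (-1 - α)) := by
          rw [e, one_mul]
      _ = c ^ (1 + α) * ((1 - Real.exp (-(c * t))) * (c ^ (-1 - α) * t ^ (-1 - α))) := by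
          rw [mul_comm t c]; ring
  rw [step1, integral_const_mul, integral_comp_mul_left_Ioi g 0 hc, mul_zero]
  rw [smul_eq_mul, ← mul_assoc]
  congr 1
  rw [← Real.rpow_neg_one c, ← Real.rpow_add hc, show (1 + α) + (-1) = α by ring]

open MeasureTheory Set in
lemma integral_I_pos {α : ℝ} (hα0 : 0 < α) (hα1 : α < 1) :
    0 < ∫ t in Ioi (0:ℝ), (1 - Real.exp (-t)) * t ^ (-1 - α) := by
  have hint : IntegrableOn (fun t : ℝ => (1 - Real.exp (-t)) * t ^ (-1 - α)) (Ioi 0) := by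
    have := integrableOn_aux hα0 hα1 (c := 1) zero_le_one
    simpa using this
  have hnonneg : 0 ≤ᵐ[volume.restrict (Ioi (0:ℝ))]
      fun t : ℝ => (1 - Real.exp (-t)) * t ^ (-1 - α) := by
    filter_upwards [ae_restrict_mem measurableSet_Ioi] with t ht
    have ht0 : (0:ℝ) < t := ht
    exact mul_nonneg (exp_one_sub_nonneg ht0.le).1 (Real.rpow_nonneg ht0.le _)
  set cst : ℝ := (1 - Real.exp (-1)) * 2 ^ (-1 - α) with hcst
  have hcstpos : 0 < cst := by
    apply mul_pos
    · have : Real.exp (-1) < 1 := Real.exp_lt_one_iff.mpr (by norm_num)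
      linarith
    · exact Real.rpow_pos_of_pos (by norm_num) _
  have hlow : ∀ t ∈ Ioc (1:ℝ) 2, cst ≤ (1 - Real.exp (-t)) * t ^ (-1 - α) := by
    intro t ht
    have ht1 : (1:ℝ) ≤ t := ht.1.le
    have ht2 : t ≤ 2 := ht.2
    apply mul_le_mul
    · have : Real.exp (-t) ≤ Real.exp (-1) := Real.exp_le_exp.mpr (by linarith)
      linarith
    · exact Real.rpow_le_rpow_of_nonpos (by linarith) ht2 (by linarith)
    · exact Real.rpow_nonneg (by norm_num) _
    · have : Real.exp (-t) ≤ 1 := Real.exp_le_one_iff.mpr (by linarith)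
      linarith
  have hsub : ∫ t in Ioc (1:ℝ) 2, (1 - Real.exp (-t)) * t ^ (-1 - α)
      ≤ ∫ t in Ioi (0:ℝ), (1 - Real.exp (-t)) * t ^ (-1 - α) := by
    apply setIntegral_mono_set hint hnonneg
    exact Filter.Eventually.of_forall fun t ht => lt_trans zero_lt_one ht.1
  have hintsub : IntegrableOn (fun t : ℝ => (1 - Real.exp (-t)) * t ^ (-1 - α)) (Ioc 1 2) :=
    hint.mono (fun t ht => lt_trans zero_lt_one ht.1) le_rfl
  have hge := setIntegral_ge_of_const_le_real (μ := volume) measurableSet_Ioc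
    (by simp) hlow hintsub
  have hvol : (volume (Ioc (1:ℝ) 2)).toReal = 1 := by
    rw [Real.volume_Ioc]
    norm_num
  rw [measureReal_def, hvol, mul_one] at hge
  linarith

open Finset in
lemma forward_dir {n m : ℕ} (hm : 1 ≤ m) (w : Fin n → ℝ) (hw : ∀ k, 0 < w k)
    (x : Fin (m + 1) → (Fin n → ℝ))
    (hxH : ∀ i k, x i k = 0 ∨ x i k = w k)
    (hAI : AffineIndependent ℝ x) :
    ∃ p : ℝ, 1 < p ∧
      ∀ ξ : Fin (m + 1) → ℝ, ∑ i, ξ i = 0 →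
        ∑ i, ∑ j, (∑ k, |x i k - x j k|) ^ p * ξ i * ξ j ≤ 0 := by
  classical
  set d : Fin (m+1) → Fin (m+1) → ℝ := fun i j => ∑ k, |x i k - x j k| with hd
  have hd0 : ∀ i j, 0 ≤ d i j := fun i j => Finset.sum_nonneg fun k _ => abs_nonneg _
  set Qf : (Fin (m+1) → ℝ) → ℝ := fun ξ => ∑ i, ∑ j, d i j * ξ i * ξ j with hQf
  -- affine independence in coordinates
  have hT0 : ∀ ξ : Fin (m+1) → ℝ, ∑ i, ξ i = 0 → (∀ k, ∑ i, ξ i * x i k = 0) →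
      ∀ i, ξ i = 0 := by
    intro ξ hsum hcoord i
    refine affineIndependent_iff.mp hAI Finset.univ ξ hsum ?_ i (Finset.mem_univ i)
    funext k
    rw [Finset.sum_apply]
    simpa using hcoord k
  -- strict negativity of Q1 on nonzero hyperplane vectors
  have hQ1neg : ∀ ξ : Fin (m+1) → ℝ, ∑ i, ξ i = 0 → (∃ i, ξ i ≠ 0) → Qf ξ < 0 := by
    intro ξ hsum hne
    rw [hQf]
    simp only []
    rw [cube_Q1 w hw x hxH ξ hsum, neg_lt, neg_zero]
    have hex : ∃ k, ∑ i, ξ i * x i k ≠ 0 := by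
      by_contra hc
      push_neg at hc
      obtain ⟨i, hi⟩ := hne
      exact hi (hT0 ξ hsum hc i)
    obtain ⟨k0, hk0⟩ := hex
    apply Finset.sum_pos'
    · intro k _
      have hwk := hw k
      positivity
    · refine ⟨k0, Finset.mem_univ k0, ?_⟩
      have h1 : 0 < (∑ i, ξ i * x i k0) ^ 2 := by positivity
      have h2 : 0 < 2 / w k0 := by have := hw k0; positivity
      exact mul_pos h2 h1
  -- the compact set
  set S : Set (Fin (m+1) → ℝ) := {ξ | ∑ i, ξ i = 0 ∧ ∑ i, |ξ i| = 1} with hS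
  have h01 : (0 : Fin (m+1)) ≠ 1 := by
    intro h
    have := congrArg Fin.val h
    rw [Fin.val_one'] at this
    simp [Nat.mod_eq_of_lt (by omega : 1 < m + 1)] at this
  have hSne : S.Nonempty := by
    refine ⟨fun i => if i = 0 then (2⁻¹:ℝ) else if i = 1 then -2⁻¹ else 0, ?_, ?_⟩
    · have hsplit : ∀ i : Fin (m+1),
          (if i = 0 then (2⁻¹:ℝ) else if i = 1 then -2⁻¹ else 0)
            = (if i = 0 then (2⁻¹:ℝ) else 0) + (if i = 1 then -2⁻¹ else 0) := by
        intro i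
        by_cases h0 : i = 0
        · subst h0; simp [h01]
        · rw [if_neg h0, if_neg h0]
          by_cases h1 : i = 1 <;> simp [h1]
      rw [Finset.sum_congr rfl fun i _ => hsplit i, Finset.sum_add_distrib,
        Finset.sum_ite_eq' Finset.univ, Finset.sum_ite_eq' Finset.univ]
      norm_num
    · have hsplit : ∀ i : Fin (m+1),
          |if i = 0 then (2⁻¹:ℝ) else if i = 1 then -2⁻¹ else 0|
            = (if i = 0 then (2⁻¹:ℝ) else 0) + (if i = 1 then 2⁻¹ else 0) := by
        intro i
        by_cases h0 : i = 0
        · subst h0; rw [if_pos rfl, if_pos rfl, if_neg h01, abs_of_pos (by norm_num)]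
          norm_num
        · rw [if_neg h0, if_neg h0]
          by_cases h1 : i = 1
          · subst h1; rw [if_pos rfl, if_pos rfl, abs_of_neg (by norm_num)]
            norm_num
          · rw [if_neg h1, if_neg h1, abs_zero, add_zero]
      rw [Finset.sum_congr rfl fun i _ => hsplit i, Finset.sum_add_distrib,
        Finset.sum_ite_eq' Finset.univ, Finset.sum_ite_eq' Finset.univ]
      norm_num
  have hScomp : IsCompact S := by
    have hclosed : IsClosed S := by
      have hc1 : Continuous fun ξ : Fin (m+1) → ℝ => ∑ i, ξ i :=
        continuous_finset_sum _ fun i _ => continuous_apply i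
      have hc2 : Continuous fun ξ : Fin (m+1) → ℝ => ∑ i, |ξ i| :=
        continuous_finset_sum _ fun i _ => (continuous_apply i).abs
      have : S = ((fun ξ : Fin (m+1) → ℝ => ∑ i, ξ i) ⁻¹' {0})
          ∩ ((fun ξ : Fin (m+1) → ℝ => ∑ i, |ξ i|) ⁻¹' {1}) := rfl
      rw [this]
      exact (isClosed_singleton.preimage hc1).inter (isClosed_singleton.preimage hc2)
    have hsub : S ⊆ Metric.closedBall (0 : Fin (m+1) → ℝ) 1 := by
      intro ξ hξ
      rw [mem_closedBall_zero_iff]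
      rw [pi_norm_le_iff_of_nonneg zero_le_one]
      intro i
      rw [Real.norm_eq_abs]
      calc |ξ i| ≤ ∑ j, |ξ j| :=
            Finset.single_le_sum (f := fun j => |ξ j|) (fun j _ => abs_nonneg _)
              (Finset.mem_univ i)
        _ = 1 := hξ.2
    exact (isCompact_closedBall (0 : Fin (m+1) → ℝ) 1).of_isClosed_subset hclosed hsub
  have hQcont : Continuous Qf :=
    continuous_finset_sum _ fun i _ => continuous_finset_sum _ fun j _ =>
      (continuous_const.mul (continuous_apply i)).mul (continuous_apply j)
  obtain ⟨ξs, hξsS, hmax⟩ := hScomp.exists_isMaxOn hSne hQcont.continuousOn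
  set a : ℝ := -Qf ξs with ha
  have hapos : 0 < a := by
    rw [ha, neg_pos]
    apply hQ1neg ξs hξsS.1
    by_contra hc
    push_neg at hc
    have : ∑ i, |ξs i| = 0 := Finset.sum_eq_zero fun i _ => by rw [hc i, abs_zero]
    rw [hξsS.2] at this
    norm_num at this
  -- the quadratic bound
  have hbound : ∀ ξ : Fin (m+1) → ℝ, ∑ i, ξ i = 0 → Qf ξ ≤ -a * (∑ i, |ξ i|) ^ 2 := by
    intro ξ hsum
    by_cases h0 : ∑ i, |ξ i| = 0
    · have hz : ∀ i, ξ i = 0 := by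
        intro i
        have := (Finset.sum_eq_zero_iff_of_nonneg (fun j _ => abs_nonneg (ξ j))).mp h0 i
          (Finset.mem_univ i)
        exact abs_eq_zero.mp this
      have : Qf ξ = 0 := Finset.sum_eq_zero fun i _ => Finset.sum_eq_zero fun j _ => by
        rw [hz i]; ring
      rw [this, h0]
      norm_num
    · set M : ℝ := ∑ i, |ξ i| with hM
      have hMpos : 0 < M := lt_of_le_of_ne (Finset.sum_nonneg fun i _ => abs_nonneg _)
        (Ne.symm h0)
      set ξ' : Fin (m+1) → ℝ := fun i => M⁻¹ * ξ i with hξ'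
      have hξ'S : ξ' ∈ S := by
        constructor
        · rw [hξ']
          simp only [← Finset.mul_sum, hsum, mul_zero]
        · rw [hξ']
          simp only [abs_mul, abs_of_pos (inv_pos.mpr hMpos), ← Finset.mul_sum, ← hM]
          rw [inv_mul_cancel₀ (ne_of_gt hMpos)]
      have hscale : Qf ξ' = M⁻¹ * M⁻¹ * Qf ξ := by
        rw [hQf]
        simp only [hξ', Finset.mul_sum]
        apply Finset.sum_congr rfl; intro i _
        apply Finset.sum_congr rfl; intro j _
        ring
      have hle : Qf ξ' ≤ -a := by
        have h' := hmax hξ'S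
        rw [ha, neg_neg]
        exact h'
      rw [hscale] at hle
      have := mul_le_mul_of_nonneg_left hle (le_of_lt (mul_pos hMpos hMpos))
      calc Qf ξ = (M * M) * (M⁻¹ * M⁻¹ * Qf ξ) := by
            field_simp
        _ ≤ (M * M) * (-a) := this
        _ = -a * M ^ 2 := by ring
  -- choose p close to 1
  have hev : ∀ᶠ q in nhds (1:ℝ), (∀ i j, |d i j ^ q - d i j| ≤ a) := by
    rw [Filter.eventually_all]
    intro i
    rw [Filter.eventually_all]
    intro j
    by_cases hdij : d i j = 0
    · filter_upwards [eventually_gt_nhds zero_lt_one] with q hq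
      rw [hdij, Real.zero_rpow (ne_of_gt hq), sub_zero, abs_zero]
      exact hapos.le
    · have hpos : 0 < d i j := lt_of_le_of_ne (hd0 i j) (Ne.symm hdij)
      have hcont : ContinuousAt (fun q : ℝ => d i j ^ q - d i j) 1 := by
        have h1 : Continuous fun q : ℝ => Real.exp (Real.log (d i j) * q) - d i j := by
          fun_prop
        have h2 : (fun q : ℝ => d i j ^ q - d i j)
            = fun q => Real.exp (Real.log (d i j) * q) - d i j := by
          funext q
          rw [Real.rpow_def_of_pos hpos]
        rw [h2]
        exact h1.continuousAt
      have htends : Filter.Tendsto (fun q : ℝ => d i j ^ q - d i j) (nhds 1) (nhds 0) := by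
        have h := hcont.tendsto
        rwa [show d i j ^ (1:ℝ) - d i j = 0 by rw [Real.rpow_one]; ring] at h
      have hball : ∀ᶠ y in nhds (0:ℝ), |y| ≤ a := by
        filter_upwards [Metric.ball_mem_nhds (0:ℝ) hapos] with y hy
        rw [Metric.mem_ball, Real.dist_eq, sub_zero] at hy
        exact hy.le
      exact htends.eventually hball
  rw [Metric.eventually_nhds_iff] at hev
  obtain ⟨δ, hδpos, hδ⟩ := hev
  refine ⟨1 + δ / 2, by linarith, ?_⟩
  have hpd : ∀ i j, |d i j ^ (1 + δ/2) - d i j| ≤ a := by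
    apply hδ
    rw [Real.dist_eq, show (1 + δ/2 - 1 : ℝ) = δ/2 by ring, abs_of_pos (by linarith)]
    linarith
  intro ξ hsum
  have hsplit : ∀ i j : Fin (m+1), d i j ^ (1 + δ/2) * ξ i * ξ j
      = d i j * ξ i * ξ j + (d i j ^ (1 + δ/2) - d i j) * ξ i * ξ j := by
    intro i j; ring
  calc ∑ i, ∑ j, d i j ^ (1 + δ/2) * ξ i * ξ j
      = Qf ξ + ∑ i, ∑ j, (d i j ^ (1 + δ/2) - d i j) * ξ i * ξ j := by
        rw [hQf]
        simp only []
        rw [← Finset.sum_add_distrib]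
        apply Finset.sum_congr rfl; intro i _
        rw [← Finset.sum_add_distrib]
        exact Finset.sum_congr rfl fun j _ => hsplit i j
    _ ≤ -a * (∑ i, |ξ i|) ^ 2 + ∑ i, ∑ j, a * |ξ i| * |ξ j| := by
        apply add_le_add (hbound ξ hsum)
        apply Finset.sum_le_sum; intro i _
        apply Finset.sum_le_sum; intro j _
        calc (d i j ^ (1 + δ/2) - d i j) * ξ i * ξ j
            ≤ |(d i j ^ (1 + δ/2) - d i j) * ξ i * ξ j| := le_abs_self _
          _ = |d i j ^ (1 + δ/2) - d i j| * |ξ i| * |ξ j| := by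
              rw [abs_mul, abs_mul]
          _ ≤ a * |ξ i| * |ξ j| := by
              apply mul_le_mul_of_nonneg_right ?_ (abs_nonneg _)
              exact mul_le_mul_of_nonneg_right (hpd i j) (abs_nonneg _)
    _ = -a * (∑ i, |ξ i|) ^ 2 + a * (∑ i, |ξ i|) * (∑ j, |ξ j|) := by
        congr 1
        rw [mul_assoc, Finset.sum_mul_sum, Finset.mul_sum]
        apply Finset.sum_congr rfl; intro i _
        rw [Finset.mul_sum]
        apply Finset.sum_congr rfl; intro j _
        ring
    _ = 0 := by ring

set_option maxHeartbeats 2000000 in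
open Finset MeasureTheory Set in
lemma backward_dir {n m : ℕ} (hm : 1 ≤ m) (w : Fin n → ℝ) (hw : ∀ k, 0 < w k)
    (x : Fin (m + 1) → (Fin n → ℝ))
    (hxH : ∀ i k, x i k = 0 ∨ x i k = w k)
    (hinj : Function.Injective x)
    {p : ℝ} (hp : 1 < p)
    (hQ : ∀ ξ : Fin (m + 1) → ℝ, ∑ i, ξ i = 0 →
      ∑ i, ∑ j, (∑ k, |x i k - x j k|) ^ p * ξ i * ξ j ≤ 0) :
    AffineIndependent ℝ x := by
  classical
  rw [affineIndependent_iff_of_fintype]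
  intro ξ hsum hvsub
  rw [Finset.weightedVSub_eq_linear_combination _ hsum] at hvsub
  have hT : ∀ k, ∑ i, ξ i * x i k = 0 := by
    intro k
    have := congrFun hvsub k
    rw [Finset.sum_apply] at this
    simpa using this
  by_contra hc
  push_neg at hc
  obtain ⟨i1, hi1⟩ := hc
  -- setup
  set d : Fin (m+1) → Fin (m+1) → ℝ := fun i j => ∑ k, |x i k - x j k| with hd
  have hd0 : ∀ i j, 0 ≤ d i j := fun i j => Finset.sum_nonneg fun k _ => abs_nonneg _
  have hdsymm : ∀ i j, d i j = d j i := fun i j =>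
    Finset.sum_congr rfl fun k _ => abs_sub_comm _ _
  have hddiag : ∀ i, d i i = 0 := fun i =>
    Finset.sum_eq_zero fun k _ => by rw [sub_self, abs_zero]
  have hdpos : ∀ i j, i ≠ j → 0 < d i j := by
    intro i j hij
    have hne : x i ≠ x j := fun h => hij (hinj h)
    obtain ⟨k0, hk0⟩ := Function.ne_iff.mp hne
    have h1 : 0 < |x i k0 - x j k0| := abs_pos.mpr (sub_ne_zero.mpr hk0)
    calc (0:ℝ) < |x i k0 - x j k0| := h1
      _ ≤ d i j := Finset.single_le_sum (f := fun k => |x i k - x j k|)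
          (fun k _ => abs_nonneg _) (Finset.mem_univ k0)
  have hppos : 0 < p := lt_trans zero_lt_one hp
  set N : Fin (m+1) → Fin (m+1) → ℝ := fun i j => d i j ^ p with hN
  have hNsymm : ∀ i j, N i j = N j i := fun i j => by rw [hN]; simp only []; rw [hdsymm]
  have hNdiag : ∀ i, N i i = 0 := fun i => by
    rw [hN]; simp only []; rw [hddiag, Real.zero_rpow (ne_of_gt hppos)]
  have hNneg : ∀ ζ : Fin (m+1) → ℝ, ∑ i, ζ i = 0 →
      ∑ i, ∑ j, N i j * ζ i * ζ j ≤ 0 := hQ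
  have hNpos : ∀ i j, i ≠ j → 0 < N i j := fun i j hij =>
    Real.rpow_pos_of_pos (hdpos i j hij) p
  -- Schoenberg positivity
  have hF : ∀ t : ℝ, 0 ≤ t → 0 ≤ ∑ i, ∑ j, ξ i * ξ j * Real.exp (-(t * N i j)) :=
    fun t ht => schoenberg_psd N hNsymm hNdiag hNneg ht ξ
  -- Q1 vanishes
  have hQ1 : ∑ i, ∑ j, d i j * ξ i * ξ j = 0 := by
    rw [hd]
    rw [cube_Q1 w hw x hxH ξ hsum]
    rw [Finset.sum_eq_zero fun k _ => by rw [hT k]; ring]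
    ring
  -- integral representation
  set α : ℝ := p⁻¹ with hα
  have hα0 : 0 < α := by rw [hα]; positivity
  have hα1 : α < 1 := by
    rw [hα]
    rw [inv_lt_one_iff₀]
    right; exact hp
  set I : ℝ := ∫ t in Ioi (0:ℝ), (1 - Real.exp (-t)) * t ^ (-1 - α) with hI
  have hIpos : 0 < I := integral_I_pos hα0 hα1
  have hrep : ∀ i j, (∫ t in Ioi (0:ℝ), (1 - Real.exp (-(t * N i j))) * t ^ (-1 - α))
      = d i j * I := by
    intro i j
    by_cases hij : i = j
    · subst hij
      rw [hNdiag, hddiag]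
      simp
    · rw [integral_scaling hα0 hα1 (hNpos i j hij), ← hI]
      congr 1
      rw [hN]
      simp only []
      rw [← Real.rpow_mul (hd0 i j), mul_inv_cancel₀ (ne_of_gt hppos), Real.rpow_one]
  -- integrability of each term
  have hint : ∀ i j, IntegrableOn
      (fun t => ξ i * ξ j * ((1 - Real.exp (-(t * N i j))) * t ^ (-1 - α))) (Ioi (0:ℝ)) := by
    intro i j
    by_cases hij : i = j
    · subst hij
      rw [hNdiag]
      have hN0 : ∀ i : Fin (m+1), (0:ℝ) ≤ N i i := fun i => le_of_eq (hNdiag i).symm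
      exact (integrableOn_aux hα0 hα1 le_rfl).const_mul _
    · exact (integrableOn_aux hα0 hα1 (hNpos i j hij).le).const_mul _
  -- swap sum and integral
  have hswap : ∑ i, ∑ j, ξ i * ξ j * (d i j * I)
      = ∫ t in Ioi (0:ℝ), ∑ i, ∑ j,
          ξ i * ξ j * ((1 - Real.exp (-(t * N i j))) * t ^ (-1 - α)) := by
    rw [integral_finset_sum Finset.univ fun i _ => integrable_finset_sum Finset.univ
      fun j _ => hint i j]
    apply Finset.sum_congr rfl; intro i _
    rw [integral_finset_sum Finset.univ fun j _ => hint i j]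
    apply Finset.sum_congr rfl; intro j _
    rw [← hrep i j, ← integral_const_mul]
  have hQzero : ∑ i, ∑ j, ξ i * ξ j * (d i j * I) = 0 := by
    have : ∑ i, ∑ j, ξ i * ξ j * (d i j * I) = I * ∑ i, ∑ j, d i j * ξ i * ξ j := by
      rw [Finset.mul_sum]
      apply Finset.sum_congr rfl; intro i _
      rw [Finset.mul_sum]
      apply Finset.sum_congr rfl; intro j _
      ring
    rw [this, hQ1, mul_zero]
  -- the integrand identity
  have haux : ∀ t : ℝ,
      (∑ i, ∑ j, ξ i * ξ j * ((1 - Real.exp (-(t * N i j))) * t ^ (-1 - α)))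
        = -((∑ i, ∑ j, ξ i * ξ j * Real.exp (-(t * N i j))) * t ^ (-1 - α)) := by
    intro t
    have h1 : ∀ i j, ξ i * ξ j * ((1 - Real.exp (-(t * N i j))) * t ^ (-1 - α))
        = ξ i * (ξ j * t ^ (-1 - α)) - ξ i * ξ j * Real.exp (-(t * N i j)) * t ^ (-1 - α) := by
      intro i j; ring
    rw [Finset.sum_congr rfl fun i (_ : i ∈ Finset.univ) => by
      rw [Finset.sum_congr rfl fun j (_ : j ∈ Finset.univ) => h1 i j,
        Finset.sum_sub_distrib]]
    rw [Finset.sum_sub_distrib]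
    have h2 : ∑ i, ∑ j, ξ i * (ξ j * t ^ (-1 - α)) = 0 := by
      rw [Finset.sum_congr rfl fun i (_ : i ∈ Finset.univ) => by
        rw [← Finset.mul_sum, ← Finset.sum_mul, hsum, zero_mul, mul_zero]]
      rw [Finset.sum_const_zero]
    rw [h2]
    rw [Finset.sum_congr rfl fun i (_ : i ∈ Finset.univ) =>
      (Finset.sum_mul _ _ _).symm]
    rw [← Finset.sum_mul]
    ring
  -- quantities for the contradiction
  set Sq : ℝ := ∑ i, ξ i ^ 2 with hSq
  have hSqpos : 0 < Sq := by
    rw [hSq]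
    apply Finset.sum_pos' (fun i _ => sq_nonneg _)
    exact ⟨i1, Finset.mem_univ i1, by positivity⟩
  set Mabs : ℝ := ∑ i, |ξ i| with hMabs
  have hMabs0 : 0 ≤ Mabs := Finset.sum_nonneg fun i _ => abs_nonneg _
  have h01 : (0 : Fin (m+1)) ≠ 1 := by
    intro h
    have := congrArg Fin.val h
    rw [Fin.val_one'] at this
    simp [Nat.mod_eq_of_lt (by omega : 1 < m + 1)] at this
  set P : Finset (Fin (m+1) × Fin (m+1)) :=
    Finset.univ.filter (fun pr => pr.1 ≠ pr.2) with hP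
  have hPne : P.Nonempty := ⟨(0, 1), by simp [hP, h01]⟩
  set Nmin : ℝ := P.inf' hPne (fun pr => N pr.1 pr.2) with hNmin
  have hNminpos : 0 < Nmin := by
    rw [hNmin, Finset.lt_inf'_iff]
    intro pr hpr
    rw [hP, Finset.mem_filter] at hpr
    exact hNpos _ _ hpr.2
  have hNminle : ∀ i j, i ≠ j → Nmin ≤ N i j := by
    intro i j hij
    rw [hNmin]
    exact Finset.inf'_le _ (Finset.mem_filter.mpr ⟨Finset.mem_univ (i, j), hij⟩)
  set T : ℝ := max 1 (2 * (Mabs ^ 2 + 1) / (Sq * Nmin)) with hT'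
  have hT1 : (1:ℝ) ≤ T := le_max_left _ _
  have hTpos : 0 < T := lt_of_lt_of_le zero_lt_one hT1
  set ε : ℝ := Sq / (2 * (Mabs ^ 2 + 1)) with hε
  have hεpos : 0 < ε := div_pos hSqpos (by positivity)
  have hdecay : ∀ t, T ≤ t → ∀ i j, i ≠ j → Real.exp (-(t * N i j)) ≤ ε := by
    intro t ht i j hij
    have htp : 0 < t := lt_of_lt_of_le hTpos ht
    have hy : 0 < t * N i j := mul_pos htp (hNpos i j hij)
    have h1 : 2 * (Mabs ^ 2 + 1) / Sq ≤ t * N i j := by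
      have e2 : 2 * (Mabs ^ 2 + 1) / (Sq * Nmin) * Nmin = 2 * (Mabs ^ 2 + 1) / Sq := by
        field_simp
      calc 2 * (Mabs ^ 2 + 1) / Sq
          = 2 * (Mabs ^ 2 + 1) / (Sq * Nmin) * Nmin := e2.symm
        _ ≤ T * Nmin := mul_le_mul_of_nonneg_right (le_max_right _ _) hNminpos.le
        _ ≤ t * N i j :=
            mul_le_mul ht (hNminle i j hij) hNminpos.le (le_trans zero_le_one (hT1.trans ht))
    have h3 : Real.exp (-(t * N i j)) ≤ (t * N i j)⁻¹ := by
      rw [Real.exp_neg]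
      apply inv_anti₀ hy
      linarith [Real.add_one_le_exp (t * N i j)]
    have hq : (0:ℝ) < 2 * (Mabs ^ 2 + 1) / Sq := by positivity
    have h4 := inv_anti₀ hq h1
    rw [inv_div] at h4
    calc Real.exp (-(t * N i j)) ≤ (t * N i j)⁻¹ := h3
      _ ≤ Sq / (2 * (Mabs ^ 2 + 1)) := h4
      _ = ε := hε.symm
  have hFlow : ∀ t, T ≤ t → Sq / 2 ≤ ∑ i, ∑ j, ξ i * ξ j * Real.exp (-(t * N i j)) := by
    intro t ht
    have hinner : ∀ i, ξ i ^ 2 - |ξ i| * Mabs * ε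
        ≤ ∑ j, ξ i * ξ j * Real.exp (-(t * N i j)) := by
      intro i
      have hsp : ∑ j, ξ i * ξ j * Real.exp (-(t * N i j))
          = ξ i * ξ i * Real.exp (-(t * N i i))
            + ∑ j ∈ Finset.univ.erase i, ξ i * ξ j * Real.exp (-(t * N i j)) :=
        (Finset.add_sum_erase Finset.univ _ (Finset.mem_univ i)).symm
      have hdiagterm : ξ i * ξ i * Real.exp (-(t * N i i)) = ξ i ^ 2 := by
        rw [hNdiag i, mul_zero, neg_zero, Real.exp_zero]; ring
      have hsub2 : ∑ j ∈ Finset.univ.erase i, |ξ i| * |ξ j| * ε ≤ |ξ i| * Mabs * ε := by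
        calc ∑ j ∈ Finset.univ.erase i, |ξ i| * |ξ j| * ε
            ≤ ∑ j, |ξ i| * |ξ j| * ε :=
              Finset.sum_le_sum_of_subset_of_nonneg (Finset.erase_subset _ _)
                (fun j _ _ => mul_nonneg (mul_nonneg (abs_nonneg _) (abs_nonneg _)) hεpos.le)
          _ = |ξ i| * Mabs * ε := by
              rw [hMabs, Finset.mul_sum, Finset.sum_mul]
      have hterm : ∀ j ∈ Finset.univ.erase i,
          -(|ξ i| * |ξ j| * ε) ≤ ξ i * ξ j * Real.exp (-(t * N i j)) := by
        intro j hj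
        have hne : i ≠ j := fun h => (Finset.mem_erase.mp hj).1 h.symm
        have he := hdecay t ht i j hne
        have hepos := Real.exp_pos (-(t * N i j))
        have habs : |ξ i * ξ j * Real.exp (-(t * N i j))| ≤ |ξ i| * |ξ j| * ε := by
          rw [abs_mul, abs_mul, abs_of_pos hepos]
          exact mul_le_mul_of_nonneg_left he (mul_nonneg (abs_nonneg _) (abs_nonneg _))
        linarith [neg_abs_le (ξ i * ξ j * Real.exp (-(t * N i j)))]
      have hoff : -(|ξ i| * Mabs * ε) ≤ ∑ j ∈ Finset.univ.erase i,
          ξ i * ξ j * Real.exp (-(t * N i j)) := by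
        calc -(|ξ i| * Mabs * ε)
            ≤ -(∑ j ∈ Finset.univ.erase i, |ξ i| * |ξ j| * ε) := neg_le_neg hsub2
          _ = ∑ j ∈ Finset.univ.erase i, -(|ξ i| * |ξ j| * ε) := by
              rw [Finset.sum_neg_distrib]
          _ ≤ _ := Finset.sum_le_sum hterm
      rw [hsp, hdiagterm]
      linarith
    have htot := Finset.sum_le_sum fun i (_ : i ∈ Finset.univ) => hinner i
    have hsum2 : ∑ i, (ξ i ^ 2 - |ξ i| * Mabs * ε) = Sq - Mabs ^ 2 * ε := by
      rw [Finset.sum_sub_distrib, ← hSq]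
      congr 1
      have e3 : ∑ i, |ξ i| * Mabs * ε = (∑ i, |ξ i|) * (Mabs * ε) := by
        rw [Finset.sum_mul]
        exact Finset.sum_congr rfl fun i _ => by ring
      rw [e3, ← hMabs]
      ring
    have hfrac : Mabs ^ 2 * ε ≤ Sq / 2 := by
      rw [hε, ← mul_div_assoc, div_le_div_iff₀ (by positivity) (by norm_num)]
      nlinarith [hSqpos, sq_nonneg Mabs]
    calc Sq / 2 = Sq - Sq / 2 := by ring
      _ ≤ Sq - Mabs ^ 2 * ε := by linarith
      _ = ∑ i, (ξ i ^ 2 - |ξ i| * Mabs * ε) := hsum2.symm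
      _ ≤ _ := htot
  -- bound on Ioc T (T+1)
  set c1 : ℝ := Sq / 2 * (T + 1) ^ (-1 - α) with hc1
  have hc1pos : 0 < c1 := by
    rw [hc1]
    exact mul_pos (by positivity) (Real.rpow_pos_of_pos (by linarith) _)
  have hGbound : ∀ t ∈ Ioc T (T + 1),
      (∑ i, ∑ j, ξ i * ξ j * ((1 - Real.exp (-(t * N i j))) * t ^ (-1 - α))) ≤ -c1 := by
    intro t ht
    have htp : 0 < t := lt_of_le_of_lt hTpos.le ht.1
    rw [haux t, neg_le_neg_iff, hc1]
    apply mul_le_mul (hFlow t ht.1.le) ?_ ?_ ?_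
    · exact Real.rpow_le_rpow_of_nonpos htp ht.2 (by linarith)
    · exact Real.rpow_nonneg (by linarith) _
    · exact hF t htp.le
  -- integrability
  have hGint : IntegrableOn
      (fun t => ∑ i, ∑ j, ξ i * ξ j * ((1 - Real.exp (-(t * N i j))) * t ^ (-1 - α)))
      (Ioi (0:ℝ)) :=
    integrable_finset_sum _ fun i _ => integrable_finset_sum _ fun j _ => hint i j
  have hGnonpos : ∀ᵐ t ∂(volume.restrict (Ioi (0:ℝ))),
      0 ≤ -(∑ i, ∑ j, ξ i * ξ j * ((1 - Real.exp (-(t * N i j))) * t ^ (-1 - α))) := by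
    filter_upwards [ae_restrict_mem measurableSet_Ioi] with t ht
    have htp : (0:ℝ) < t := ht
    rw [haux t, neg_neg]
    exact mul_nonneg (hF t htp.le) (Real.rpow_nonneg htp.le _)
  have hneg_int : ∫ t in Ioi (0:ℝ),
      -(∑ i, ∑ j, ξ i * ξ j * ((1 - Real.exp (-(t * N i j))) * t ^ (-1 - α))) = 0 := by
    rw [integral_neg, ← hswap, hQzero, neg_zero]
  have hmono : (∫ t in Ioc T (T+1),
        -(∑ i, ∑ j, ξ i * ξ j * ((1 - Real.exp (-(t * N i j))) * t ^ (-1 - α))))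
      ≤ ∫ t in Ioi (0:ℝ),
        -(∑ i, ∑ j, ξ i * ξ j * ((1 - Real.exp (-(t * N i j))) * t ^ (-1 - α))) := by
    apply setIntegral_mono_set hGint.neg hGnonpos
    exact Filter.Eventually.of_forall fun t ht => mem_Ioi.mpr (lt_trans hTpos ht.1)
  have hIocsub : Ioc T (T+1) ⊆ Ioi (0:ℝ) := fun t ht => lt_trans hTpos ht.1
  have hconst : c1 * (volume (Ioc T (T+1))).toReal
      ≤ ∫ t in Ioc T (T+1),
        -(∑ i, ∑ j, ξ i * ξ j * ((1 - Real.exp (-(t * N i j))) * t ^ (-1 - α))) := by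
    apply setIntegral_ge_of_const_le_real measurableSet_Ioc (by simp)
    · intro t ht
      linarith [hGbound t ht]
    · exact ((hGint.mono hIocsub le_rfl).neg)
  have hvol : (volume (Ioc T (T+1))).toReal = 1 := by
    rw [Real.volume_Ioc, show T + 1 - T = 1 by ring]
    simp
  rw [hvol, mul_one] at hconst
  linarith

/-- A nontrivial subset of a weighted Hamming cube is affinely independent iff it
has `p`-negative type for some `p > 1`. -/
theorem stmt6 (n m : ℕ) (hn : 1 ≤ n) (hm : 1 ≤ m) (w : Fin n → ℝ) (hw : ∀ k, 0 < w k)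
    (x : Fin (m + 1) → (Fin n → ℝ))
    (hxH : ∀ i k, x i k = 0 ∨ x i k = w k)
    (hinj : Function.Injective x) :
    AffineIndependent ℝ x ↔
      (∃ p : ℝ, 1 < p ∧
        ∀ ξ : Fin (m + 1) → ℝ, ∑ i, ξ i = 0 →
          ∑ i, ∑ j, (∑ k, |x i k - x j k|) ^ p * ξ i * ξ j ≤ 0) := by
  constructor
  · exact fun hAI => forward_dir hm w hw x hxH hAI
  · rintro ⟨p, hp, hQ⟩
    exact backward_dir hm w hw x hxH hinj hp hQ
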